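/- arXiv:1505.02820 — 3 statements merged into one kernel-verified Lean document; each statement's English description precedes it below -/
import Mathlib

section
/- Consider a full binary tree whose root has weight n, where each internal node of weight m has children of weights ⌈m/2⌉ and ⌊m/2⌋, and whose leaves have weights ℓ_1,...,ℓ_m summing to n. Then the sum of the weights of all nodes (internal and leaves) is at most n + n·log₂ n − Σ_{i=1}^m (ℓ_i·log₂ ℓ_i − ℓ_i), which equals O(n·(1 + H(ℓ_1,...,ℓ_m))). -/
/-- A full binary tree where each internal node of weight `m` has children of
weights `⌈m/2⌉` and `⌊m/2⌋`. -/
inductive HalvingTree : ℕ → Type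
  | leaf : (m : ℕ) → HalvingTree m
  | node : (m : ℕ) → 2 ≤ m → HalvingTree ((m + 1) / 2) → HalvingTree (m / 2) → HalvingTree m

/-- Sum of the weights of all nodes (internal and leaves). -/
def HalvingTree.cost : {n : ℕ} → HalvingTree n → ℕ
  | _, .leaf m => m
  | _, .node m _ l r => m + l.cost + r.cost

/-- The list of the weights of the leaves, from left to right. -/
def HalvingTree.leaves : {n : ℕ} → HalvingTree n → List ℕ
  | _, .leaf m => [m]
  | _, .node _ _ l r => l.leaves ++ r.leaves


lemma HalvingTree.leaves_sum : ∀ {m : ℕ} (t : HalvingTree m), t.leaves.sum = m := by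
  intro m t
  induction t with
  | leaf m => simp [HalvingTree.leaves]
  | node m hm l r ihl ihr =>
    simp only [HalvingTree.leaves, List.sum_append, ihl, ihr]
    omega

lemma phi_shift (L : List ℕ) (x : ℝ) (hx : (0:ℝ) < x) :
    (L.map (fun l : ℕ => 2*(l:ℝ) + (l:ℝ) * Real.logb 2 x - (l:ℝ) * Real.logb 2 l)).sum
      = (L.map (fun l : ℕ => 2*(l:ℝ) + (l:ℝ) * Real.logb 2 (x/2) - (l:ℝ) * Real.logb 2 l)).sum
        + (L.sum : ℝ) := by
  induction L with
  | nil => simp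
  | cons a L ih =>
    have h2 : Real.logb 2 (x/2) = Real.logb 2 x - 1 := by
      rw [Real.logb_div (ne_of_gt hx) two_ne_zero,
        Real.logb_self_eq_one (by norm_num)]
    rw [List.map_cons, List.map_cons, List.sum_cons, List.sum_cons, List.sum_cons,
      Nat.cast_add, ih, h2]
    ring

lemma phi_sum (L : List ℕ) (c : ℝ) :
    (L.map (fun l : ℕ => 2*(l:ℝ) + (l:ℝ) * c - (l:ℝ) * Real.logb 2 l)).sum
      = 2*(L.sum:ℝ) + (L.sum:ℝ) * c
        - (L.map (fun l : ℕ => (l:ℝ) * Real.logb 2 l)).sum := by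
  induction L with
  | nil => simp
  | cons a L ih =>
    rw [List.map_cons, List.map_cons, List.sum_cons, List.sum_cons, List.sum_cons,
      Nat.cast_add, ih]
    ring

lemma ent_sum (L : List ℕ) :
    (L.map (fun l : ℕ => (l:ℝ) * Real.logb 2 l - (l:ℝ))).sum
      = (L.map (fun l : ℕ => (l:ℝ) * Real.logb 2 l)).sum - (L.sum : ℝ) := by
  induction L with
  | nil => simp
  | cons a L ih =>
    rw [List.map_cons, List.map_cons, List.sum_cons, List.sum_cons, List.sum_cons,
      Nat.cast_add, ih]
    ring

lemma aux_bound : ∀ {m : ℕ} (t : HalvingTree m) (x : ℝ), (m:ℝ) - 1 ≤ x → (1:ℝ)/2 ≤ x →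
    (t.cost : ℝ) ≤
      ((t.leaves).map (fun l : ℕ =>
        2*(l:ℝ) + (l:ℝ) * Real.logb 2 x - (l:ℝ) * Real.logb 2 l)).sum := by
  intro m t
  induction t with
  | leaf m =>
    intro x hx1 hx2
    simp only [HalvingTree.cost, HalvingTree.leaves, List.map_cons, List.map_nil,
      List.sum_cons, List.sum_nil, add_zero]
    rcases Nat.eq_zero_or_pos m with hm | hm
    · subst hm; simp
    rcases eq_or_lt_of_le (Nat.succ_le_of_lt hm : 1 ≤ m) with hm1 | hm2
    · -- m = 1
      have hmm : m = 1 := hm1.symm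
      subst hmm
      simp only [Nat.cast_one, one_mul, Real.logb_one]
      have hmono : Real.logb 2 ((1:ℝ)/2) ≤ Real.logb 2 x :=
        Real.logb_le_logb_of_le (by norm_num) (by norm_num) hx2
      have h12 : Real.logb 2 ((1:ℝ)/2) = -1 := by
        rw [show ((1:ℝ)/2) = 2⁻¹ by norm_num, Real.logb_inv,
          Real.logb_self_eq_one (by norm_num)]
      linarith
    · -- m ≥ 2
      have hm2' : (2:ℝ) ≤ m := by exact_mod_cast hm2
      have hxpos : (0:ℝ) < x := by linarith
      have hle : (m:ℝ) ≤ 2 * x := by linarith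
      have hlog : Real.logb 2 (m:ℝ) ≤ Real.logb 2 (2*x) :=
        Real.logb_le_logb_of_le (by norm_num) (by linarith) hle
      have h2x : Real.logb 2 (2*x) = 1 + Real.logb 2 x := by
        rw [Real.logb_mul two_ne_zero (ne_of_gt hxpos),
          Real.logb_self_eq_one (by norm_num)]
      have hm0 : (0:ℝ) ≤ (m:ℝ) := by positivity
      nlinarith [mul_le_mul_of_nonneg_left (hlog.trans_eq h2x) hm0]
  | node m hm l r ihl ihr =>
    intro x hx1 hx2
    have hm2 : (2:ℝ) ≤ (m:ℝ) := by exact_mod_cast hm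
    have hx1' : (1:ℝ) ≤ x := by linarith
    have hxpos : (0:ℝ) < x := by linarith
    have hlx : ((((m+1)/2 : ℕ)):ℝ) - 1 ≤ x/2 := by
      have h := Nat.cast_div_le (α := ℝ) (m := m+1) (n := 2)
      push_cast at h
      linarith
    have hrx : (((m/2 : ℕ)):ℝ) - 1 ≤ x/2 := by
      have h := Nat.cast_div_le (α := ℝ) (m := m) (n := 2)
      push_cast at h
      linarith
    have hx2' : (1:ℝ)/2 ≤ x/2 := by linarith
    have hl := ihl (x/2) hlx hx2'
    have hr := ihr (x/2) hrx hx2'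
    simp only [HalvingTree.cost, HalvingTree.leaves, List.map_append, List.sum_append]
    rw [phi_shift l.leaves x hxpos, phi_shift r.leaves x hxpos,
      HalvingTree.leaves_sum, HalvingTree.leaves_sum]
    have hsum : (((m+1)/2 : ℕ) : ℝ) + ((m/2 : ℕ) : ℝ) = m := by
      have h : (m+1)/2 + m/2 = m := by omega
      exact_mod_cast h
    push_cast only [Nat.cast_add]
    linarith

theorem halving_tree_cost_entropy_bound (n : ℕ) (hn : 1 ≤ n) (t : HalvingTree n) :
    (t.cost : ℝ) ≤
      (n : ℝ) + (n : ℝ) * Real.logb 2 n -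
        ((t.leaves).map (fun l => (l : ℝ) * Real.logb 2 l - (l : ℝ))).sum := by

  simp only [bind_pure_comp, List.map_eq_map, List.map_map, Function.comp_def]
  have hn' : (1:ℝ) ≤ n := by exact_mod_cast hn
  have h := aux_bound t (n : ℝ) (by linarith) (by linarith)
  rw [phi_sum, HalvingTree.leaves_sum] at h
  rw [ent_sum, HalvingTree.leaves_sum]
  linarith
end

section
/- If a sequence of n distinct real numbers is a concatenation of ρ monotone (each nondecreasing or nonincreasing) runs of lengths r_1,...,r_ρ, then any comparison-based sorting algorithm requires at least n·H(r_1,...,r_ρ) − O(n) comparisons in the worst case over such instances, where H(r_1,...,r_ρ) = Σ (r_i/n) log₂(n/r_i). -/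
/-- A comparison-based sorting algorithm for inputs of length `n`, modeled as a
binary decision tree: each internal node compares two positions, each leaf outputs
a permutation (the claimed sorting order). -/
inductive CTree (n : ℕ) : Type
  | leaf : Equiv.Perm (Fin n) → CTree n
  | node : Fin n → Fin n → CTree n → CTree n → CTree n

/-- Run the decision tree on an input, returning the output permutation together
with the number of comparisons performed. -/
noncomputable def CTree.run {n : ℕ} : CTree n → (Fin n → ℝ) → Equiv.Perm (Fin n) × ℕ
  | .leaf σ, _ => (σ, 0)
  | .node i j l r, f =>
      if f i ≤ f j then ((l.run f).1, (l.run f).2 + 1)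
      else ((r.run f).1, (r.run f).2 + 1)

/-- Starting position of the `i`-th run. -/
def blockStart {ρ : ℕ} (r : Fin ρ → ℕ) (i : Fin ρ) : ℕ :=
  ∑ j ∈ Finset.univ.filter (fun j => j < i), r j

/-- `f` is a sequence of `n` distinct reals that is a concatenation of `ρ` monotone
(nondecreasing or nonincreasing) runs of lengths `r 0, …, r (ρ-1)`. -/
def IsRunDecomp {n ρ : ℕ} (r : Fin ρ → ℕ) (f : Fin n → ℝ) : Prop :=
  Function.Injective f ∧
    ∀ i : Fin ρ,
      (∀ a b : Fin n, blockStart r i ≤ (a : ℕ) → (a : ℕ) ≤ (b : ℕ) →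
        (b : ℕ) < blockStart r i + r i → f a ≤ f b) ∨
      (∀ a b : Fin n, blockStart r i ≤ (a : ℕ) → (a : ℕ) ≤ (b : ℕ) →
        (b : ℕ) < blockStart r i + r i → f b ≤ f a)

namespace REB

open Finset

variable {n ρ : ℕ}

lemma bs_add (r : Fin ρ → ℕ) (i : Fin ρ) :
    blockStart r i + r i = ∑ j ∈ univ.filter (fun j => j ≤ i), r j := by
  have h : univ.filter (fun j => j ≤ i) = insert i (univ.filter (fun j => j < i)) := by
    ext j
    simp [le_iff_lt_or_eq, or_comm]
  rw [h, Finset.sum_insert (by simp), blockStart, add_comm]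

lemma bs_mono (r : Fin ρ → ℕ) {i i' : Fin ρ} (h : i < i') :
    blockStart r i + r i ≤ blockStart r i' := by
  rw [bs_add]
  exact Finset.sum_le_sum_of_subset (fun j hj => by
    simp only [mem_filter, mem_univ, true_and] at *; exact lt_of_le_of_lt hj h)

lemma bs_add_le (r : Fin ρ → ℕ) (i : Fin ρ) : blockStart r i + r i ≤ ∑ j, r j := by
  rw [bs_add]
  exact Finset.sum_le_sum_of_subset (fun j _ => mem_univ j)

lemma exists_block (r : Fin ρ → ℕ) (hsum : (∑ i, r i) = n) (a : Fin n) :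
    ∃ i, blockStart r i ≤ (a : ℕ) ∧ (a : ℕ) < blockStart r i + r i := by
  have hn : 0 < n := a.pos
  have hρ : 0 < ρ := by
    rcases Nat.eq_zero_or_pos ρ with h | h
    · subst h; simp at hsum; omega
    · exact h
  classical
  set s : Finset (Fin ρ) := univ.filter (fun i => blockStart r i ≤ (a : ℕ)) with hs
  have hne : s.Nonempty := by
    refine ⟨⟨0, hρ⟩, ?_⟩
    simp only [hs, mem_filter, mem_univ, true_and]
    have : blockStart r ⟨0, hρ⟩ = 0 := by
      apply Finset.sum_eq_zero
      intro j hj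
      simp only [mem_filter, mem_univ, true_and, Fin.lt_def] at hj
      omega
    omega
  set i := s.max' hne with hi
  have hmem : i ∈ s := s.max'_mem hne
  have h1 : blockStart r i ≤ (a : ℕ) := by
    simpa [hs] using hmem
  refine ⟨i, h1, ?_⟩
  by_contra hcon
  push_neg at hcon
  have hlt : (∑ j ∈ univ.filter (fun j => j ≤ i), r j) < ∑ j, r j := by
    calc (∑ j ∈ univ.filter (fun j => j ≤ i), r j) = blockStart r i + r i := (bs_add r i).symm
    _ ≤ (a : ℕ) := hcon
    _ < n := a.isLt
    _ = ∑ j, r j := hsum.symm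
  have hext : ∃ j : Fin ρ, ¬ j ≤ i := by
    by_contra hall
    push_neg at hall
    have : univ.filter (fun j => j ≤ i) = univ := by
      ext j; simp [hall j]
    rw [this] at hlt; omega
  obtain ⟨j, hj⟩ := hext
  have hij : (i : ℕ) + 1 < ρ := by
    have : (i : ℕ) < (j : ℕ) := by
      rw [Fin.le_def, Nat.not_le] at hj
      exact hj
    omega
  set i' : Fin ρ := ⟨(i : ℕ) + 1, hij⟩ with hi'
  have hbs : blockStart r i' = blockStart r i + r i := by
    rw [bs_add, blockStart]
    apply Finset.sum_congr _ (fun _ _ => rfl)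
    ext j
    simp only [mem_filter, mem_univ, true_and, Fin.lt_def, Fin.le_def, Fin.val_mk]
    have hv' : (i' : ℕ) = (i : ℕ) + 1 := rfl
    omega
  have : i' ∈ s := by
    simp only [hs, mem_filter, mem_univ, true_and, hbs]
    exact hcon
  have := s.le_max' i' this
  rw [Fin.le_def] at this
  simp only [hi'] at this
  omega

lemma block_unique (r : Fin ρ → ℕ) {a : ℕ} {i i' : Fin ρ}
    (h1 : blockStart r i ≤ a) (h2 : a < blockStart r i + r i)
    (h3 : blockStart r i' ≤ a) (h4 : a < blockStart r i' + r i') : i = i' := by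
  rcases lt_trichotomy i i' with h | h | h
  · have := bs_mono r h; omega
  · exact h
  · have := bs_mono r h; omega

noncomputable def blockIdx (r : Fin ρ → ℕ) (hsum : (∑ i, r i) = n) (a : Fin n) : Fin ρ :=
  (exists_block r hsum a).choose

lemma blockIdx_spec (r : Fin ρ → ℕ) (hsum : (∑ i, r i) = n) (a : Fin n) :
    blockStart r (blockIdx r hsum a) ≤ (a : ℕ) ∧
      (a : ℕ) < blockStart r (blockIdx r hsum a) + r (blockIdx r hsum a) :=
  (exists_block r hsum a).choose_spec

lemma blockIdx_eq (r : Fin ρ → ℕ) (hsum : (∑ i, r i) = n) {a : Fin n} {i : Fin ρ}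
    (h1 : blockStart r i ≤ (a : ℕ)) (h2 : (a : ℕ) < blockStart r i + r i) :
    blockIdx r hsum a = i :=
  block_unique r (blockIdx_spec r hsum a).1 (blockIdx_spec r hsum a).2 h1 h2

lemma card_blockIdx_fiber (r : Fin ρ → ℕ) (hsum : (∑ i, r i) = n) (i : Fin ρ) :
    (univ.filter fun p : Fin n => blockIdx r hsum p = i).card = r i := by
  classical
  have key : ∀ p : Fin n, blockIdx r hsum p = i ↔
      (blockStart r i ≤ (p : ℕ) ∧ (p : ℕ) < blockStart r i + r i) := by
    intro p
    constructor
    · rintro rfl; exact blockIdx_spec r hsum p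
    · rintro ⟨h1, h2⟩; exact blockIdx_eq r hsum h1 h2
  rw [show (univ.filter fun p : Fin n => blockIdx r hsum p = i)
      = univ.filter (fun p : Fin n => (p : ℕ) ∈ Finset.Ico (blockStart r i) (blockStart r i + r i))
    from by ext p; simp [key p]]
  have : (univ.filter (fun p : Fin n =>
      (p : ℕ) ∈ Finset.Ico (blockStart r i) (blockStart r i + r i))).card
      = (Finset.Ico (blockStart r i) (blockStart r i + r i)).card := by
    apply Finset.card_nbij (i := Fin.val)
    · intro p hp; simp only [Finset.mem_coe, mem_filter] at hp; exact hp.2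
    · intro p hp q hq h; exact Fin.val_injective h
    · intro b hb
      simp only [Finset.coe_Ico, Set.mem_Ico] at hb
      have hbn : b < n := by
        have := bs_add_le r i; omega
      refine ⟨⟨b, hbn⟩, ?_, rfl⟩
      simp only [Finset.coe_filter, Set.mem_setOf_eq, mem_univ, true_and, Finset.mem_Ico]
      exact hb
  rw [this, Nat.card_Ico]
  omega

/-- The input sequence associated to a permutation: value `σ.symm a` at position `a`. -/
noncomputable def fOf (σ : Equiv.Perm (Fin n)) : Fin n → ℝ := fun a => ((σ.symm a : ℕ) : ℝ)

def IsGood (r : Fin ρ → ℕ) (hsum : (∑ i, r i) = n) (σ : Equiv.Perm (Fin n)) : Prop :=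
  ∀ a b : Fin n, a ≤ b → blockIdx r hsum a = blockIdx r hsum b → σ.symm a ≤ σ.symm b

lemma isRunDecomp_of_good (r : Fin ρ → ℕ) (hsum : (∑ i, r i) = n) (σ : Equiv.Perm (Fin n))
    (hg : IsGood r hsum σ) : IsRunDecomp r (fOf σ) := by
  constructor
  · intro a b h
    simp only [fOf] at h
    exact σ.symm.injective (Fin.val_injective (Nat.cast_injective h))
  · intro i
    left
    intro a b h1 h2 h3
    have hia : blockIdx r hsum a = i := blockIdx_eq r hsum h1 (by omega)
    have hib : blockIdx r hsum b = i := blockIdx_eq r hsum (by omega) h3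
    have := hg a b (by exact h2) (hia.trans hib.symm)
    simp only [fOf]
    exact_mod_cast Fin.le_def.mp this

section Construction

variable (r : Fin ρ → ℕ) (hsum : (∑ i, r i) = n)

private lemma emb_inj (e : ∀ i : Fin ρ, Fin (r i) ↪o Fin n) {i j : Fin ρ}
    {k : Fin (r i)} {l : Fin (r j)} (hij : i = j) (h : e i k = e j l) : (k : ℕ) = (l : ℕ) := by
  subst hij
  exact congrArg Fin.val ((e i).injective h)

private lemma emb_mono (e : ∀ i : Fin ρ, Fin (r i) ↪o Fin n) {i j : Fin ρ}
    {k : Fin (r i)} {l : Fin (r j)} (hij : i = j) (hkl : (k : ℕ) ≤ (l : ℕ)) : e i k ≤ e j l := by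
  subst hij
  exact (e i).monotone (by exact hkl)

lemma exists_good (c : Fin n → Fin ρ)
    (hc : ∀ i, (univ.filter fun v => c v = i).card = r i) :
    ∃ σ : Equiv.Perm (Fin n), IsGood r hsum σ ∧ ∀ v, blockIdx r hsum (σ v) = c v := by
  classical
  set e : ∀ i : Fin ρ, Fin (r i) ↪o Fin n :=
    fun i => (univ.filter fun v => c v = i).orderEmbOfFin (hc i) with he
  have hmeme : ∀ (i : Fin ρ) (k : Fin (r i)), c (e i k) = i := by
    intro i k
    have := Finset.orderEmbOfFin_mem (univ.filter fun v => c v = i) (hc i) k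
    rw [Finset.mem_filter] at this
    exact this.2
  set g : Fin n → Fin n := fun a =>
    e (blockIdx r hsum a) ⟨(a : ℕ) - blockStart r (blockIdx r hsum a), by
        have := blockIdx_spec r hsum a; omega⟩ with hgdef
  have hmem : ∀ a, c (g a) = blockIdx r hsum a := fun a => hmeme _ _
  have hginj : Function.Injective g := by
    intro a b hab
    have hblocks : blockIdx r hsum a = blockIdx r hsum b := by
      rw [← hmem a, ← hmem b, hab]
    have hoff := emb_inj r e hblocks hab
    simp only at hoff
    have hbseq : blockStart r (blockIdx r hsum a) = blockStart r (blockIdx r hsum b) :=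
      congrArg (blockStart r) hblocks
    have ha := blockIdx_spec r hsum a
    have hb := blockIdx_spec r hsum b
    apply Fin.val_injective
    omega
  have hgbij : Function.Bijective g := (Finite.injective_iff_bijective).mp hginj
  refine ⟨(Equiv.ofBijective g hgbij).symm, ?_, ?_⟩
  · intro a b hab hblocks
    show (Equiv.ofBijective g hgbij).symm.symm a ≤ (Equiv.ofBijective g hgbij).symm.symm b
    simp only [Equiv.symm_symm, Equiv.ofBijective_apply]
    apply emb_mono r e hblocks
    simp only
    have hbseq : blockStart r (blockIdx r hsum a) = blockStart r (blockIdx r hsum b) :=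
      congrArg (blockStart r) hblocks
    have ha := blockIdx_spec r hsum a
    have hb := blockIdx_spec r hsum b
    omega
  · intro v
    set a := (Equiv.ofBijective g hgbij).symm v with ha
    have hga : g a = v := by
      have : (Equiv.ofBijective g hgbij) a = v := by
        rw [ha, Equiv.apply_symm_apply]
      simpa [Equiv.ofBijective_apply] using this
    rw [← hga, hmem a]

end Construction

lemma count_good (r : Fin ρ → ℕ) (hsum : (∑ i, r i) = n) [DecidablePred (IsGood r hsum)] :
    Nat.factorial n ≤ (∏ i, r i ^ r i) * (univ.filter (IsGood r hsum)).card := by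
  classical
  set Φ : Equiv.Perm (Fin n) → (Fin n → Fin ρ) := fun π v => blockIdx r hsum (π v) with hΦ
  -- every c in the image has fibers of the right sizes
  have himgfib : ∀ c ∈ (univ : Finset (Equiv.Perm (Fin n))).image Φ,
      ∀ i, (univ.filter fun v => c v = i).card = r i := by
    intro c hc i
    obtain ⟨π₀, -, hπ₀⟩ := Finset.mem_image.mp hc
    subst hπ₀
    have : (univ.filter fun v => Φ π₀ v = i).card
        = (univ.filter fun p : Fin n => blockIdx r hsum p = i).card := by
      apply Finset.card_nbij (i := π₀)
      · intro v hv
        simp only [Finset.mem_coe, mem_filter, mem_univ, true_and] at hv ⊢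
        exact hv
      · intro u _ v _ h; exact π₀.injective h
      · intro p hp
        simp only [Finset.coe_filter, Set.mem_setOf_eq, mem_univ, true_and] at hp
        refine ⟨π₀.symm p, ?_, π₀.apply_symm_apply p⟩
        simp only [Finset.coe_filter, Set.mem_setOf_eq, mem_univ, true_and, hΦ,
          Equiv.apply_symm_apply]
        exact hp
    rw [this, card_blockIdx_fiber]
  -- fiber bound for Φ
  have hfib : ∀ c ∈ (univ : Finset (Equiv.Perm (Fin n))).image Φ,
      (univ.filter fun π => Φ π = c).card ≤ ∏ i, r i ^ r i := by
    intro c hcmem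
    have hstep : (univ.filter fun π => Φ π = c).card
        ≤ (Fintype.piFinset fun v => univ.filter fun p : Fin n => blockIdx r hsum p = c v).card := by
      apply Finset.card_le_card_of_injOn (f := fun π : Equiv.Perm (Fin n) => (π : Fin n → Fin n))
      · intro π hπ
        simp only [Finset.mem_coe, mem_filter, mem_univ, true_and] at hπ
        rw [Finset.mem_coe, Fintype.mem_piFinset]
        intro v
        simp only [mem_filter, mem_univ, true_and]
        exact congrFun hπ v
      · intro π1 _ π2 _ h
        exact Equiv.coe_fn_injective h
    have hcard : (Fintype.piFinset fun v => univ.filter fun p : Fin n =>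
        blockIdx r hsum p = c v).card = ∏ v, r (c v) := by
      rw [Fintype.card_piFinset]
      exact Finset.prod_congr rfl fun v _ => card_blockIdx_fiber r hsum (c v)
    have hprod : (∏ v, r (c v)) = ∏ i, r i ^ r i := by
      rw [← Finset.prod_fiberwise_of_maps_to (g := c) (t := univ)
        (fun v _ => mem_univ (c v)) (fun v => r (c v))]
      apply Finset.prod_congr rfl
      intro i _
      calc (∏ v ∈ univ.filter fun v => c v = i, r (c v))
          = ∏ v ∈ univ.filter fun v => c v = i, r i :=
            Finset.prod_congr rfl (fun v hv => by rw [(mem_filter.mp hv).2])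
        _ = r i ^ r i := by rw [Finset.prod_const, himgfib c hcmem i]
    calc (univ.filter fun π => Φ π = c).card ≤ _ := hstep
      _ = ∏ v, r (c v) := hcard
      _ = ∏ i, r i ^ r i := hprod
  have h1 : (univ : Finset (Equiv.Perm (Fin n))).card
      ≤ (∏ i, r i ^ r i) * ((univ : Finset (Equiv.Perm (Fin n))).image Φ).card :=
    Finset.card_le_mul_card_image univ _ hfib
  -- injection from the image into good permutations
  have h2 : ((univ : Finset (Equiv.Perm (Fin n))).image Φ).card
      ≤ (univ.filter (IsGood r hsum)).card := by
    set F : (Fin n → Fin ρ) → Equiv.Perm (Fin n) := fun c =>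
      if h : ∃ σ : Equiv.Perm (Fin n), IsGood r hsum σ ∧ ∀ v, blockIdx r hsum (σ v) = c v
      then h.choose else 1 with hF
    have hFspec : ∀ c ∈ (univ : Finset (Equiv.Perm (Fin n))).image Φ,
        IsGood r hsum (F c) ∧ ∀ v, blockIdx r hsum ((F c) v) = c v := by
      intro c hc
      have hex : ∃ σ : Equiv.Perm (Fin n), IsGood r hsum σ ∧
          ∀ v, blockIdx r hsum (σ v) = c v := exists_good r hsum c (himgfib c hc)
      simp only [hF, dif_pos hex]
      exact hex.choose_spec
    apply Finset.card_le_card_of_injOn F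
    · intro c hc
      simp only [Finset.mem_coe, mem_filter, mem_univ, true_and]
      exact (hFspec c hc).1
    · intro c hc c' hc' h
      funext v
      rw [← (hFspec c hc).2 v, ← (hFspec c' hc').2 v, h]
  calc Nat.factorial n = (univ : Finset (Equiv.Perm (Fin n))).card := by
        rw [Finset.card_univ, Fintype.card_perm, Fintype.card_fin]
    _ ≤ (∏ i, r i ^ r i) * ((univ : Finset (Equiv.Perm (Fin n))).image Φ).card := h1
    _ ≤ (∏ i, r i ^ r i) * (univ.filter (IsGood r hsum)).card :=
        Nat.mul_le_mul_left _ h2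

open scoped Classical in
noncomputable def leavesLE {n : ℕ} : CTree n → ℕ → Finset (Equiv.Perm (Fin n))
  | .leaf σ, _ => {σ}
  | .node _ _ _ _, 0 => ∅
  | .node _ _ l r, d+1 => leavesLE l d ∪ leavesLE r d

lemma card_leavesLE {n : ℕ} (t : CTree n) (d : ℕ) : (leavesLE t d).card ≤ 2 ^ d := by
  induction t generalizing d with
  | leaf σ => simpa [leavesLE] using Nat.one_le_two_pow
  | node i j l r ihl ihr =>
    cases d with
    | zero => simp [leavesLE]
    | succ d =>
      calc (leavesLE (.node i j l r) (d+1)).card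
          ≤ (leavesLE l d).card + (leavesLE r d).card := by
            rw [leavesLE]; exact Finset.card_union_le _ _
        _ ≤ 2 ^ d + 2 ^ d := Nat.add_le_add (ihl d) (ihr d)
        _ = 2 ^ (d+1) := by ring

lemma run_mem_leavesLE {n : ℕ} (t : CTree n) (f : Fin n → ℝ) (d : ℕ)
    (h : (t.run f).2 ≤ d) : (t.run f).1 ∈ leavesLE t d := by
  induction t generalizing d with
  | leaf σ => simp [CTree.run, leavesLE]
  | node i j l r ihl ihr =>
    cases d with
    | zero =>
      exfalso
      simp only [CTree.run] at h
      split at h <;> omega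
    | succ d =>
      rw [leavesLE]
      simp only [CTree.run] at h ⊢
      by_cases hc : f i ≤ f j
      · simp only [if_pos hc] at h ⊢
        exact Finset.mem_union_left _ (ihl d (by omega))
      · simp only [if_neg hc] at h ⊢
        exact Finset.mem_union_right _ (ihr d (by omega))

lemma out_eq (r : Fin ρ → ℕ) (hsum : (∑ i, r i) = n) (σ : Equiv.Perm (Fin n))
    (t : CTree n)
    (hsort : ∀ a b : Fin n, a ≤ b →
      fOf σ ((t.run (fOf σ)).1 a) ≤ fOf σ ((t.run (fOf σ)).1 b)) :
    (t.run (fOf σ)).1 = σ := by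
  set τ := (t.run (fOf σ)).1 with hτ
  have hmono : Monotone (⇑(τ.trans σ.symm)) := by
    intro a b hab
    have := hsort a b hab
    simp only [fOf] at this
    have : ((σ.symm (τ a)) : ℕ) ≤ ((σ.symm (τ b)) : ℕ) := by exact_mod_cast this
    exact this
  have hsm : StrictMono (⇑(τ.trans σ.symm)) :=
    hmono.strictMono_of_injective (τ.trans σ.symm).injective
  have hsm' : StrictMono (⇑(τ.trans σ.symm).symm) := by
    intro a b hab
    have h := hsm.lt_iff_lt (a := (τ.trans σ.symm).symm a) (b := (τ.trans σ.symm).symm b)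
    rw [Equiv.apply_symm_apply, Equiv.apply_symm_apply] at h
    exact h.mp hab
  have h1 : ∀ k, k ≤ (τ.trans σ.symm) k :=
    fun k => @StrictMono.le_apply (Fin n) _ (inferInstance : WellFoundedLT (Fin n)) _ hsm k
  have h2 : ∀ k, k ≤ (τ.trans σ.symm).symm k :=
    fun k => @StrictMono.le_apply (Fin n) _ (inferInstance : WellFoundedLT (Fin n)) _ hsm' k
  refine Equiv.ext fun k => ?_
  have hk : σ.symm (τ k) = k := by
    have h3 := h2 ((τ.trans σ.symm) k)
    rw [Equiv.symm_apply_apply] at h3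
    exact le_antisymm h3 (h1 k)
  calc τ k = σ (σ.symm (τ k)) := (σ.apply_symm_apply (τ k)).symm
    _ = σ k := by rw [hk]

end REB

open Finset REB in
theorem sorting_runs_entropy_lower_bound :
    ∃ C : ℝ, 0 < C ∧
      ∀ (n ρ : ℕ) (r : Fin ρ → ℕ), (∀ i, 0 < r i) → (∑ i, r i) = n →
        ∀ t : CTree n,
          (∀ f : Fin n → ℝ, IsRunDecomp r f →
            ∀ a b : Fin n, a ≤ b → f ((t.run f).1 a) ≤ f ((t.run f).1 b)) →
          ∃ f : Fin n → ℝ, IsRunDecomp r f ∧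
            (n : ℝ) * (∑ i, ((r i : ℝ) / n) * Real.logb 2 ((n : ℝ) / r i)) - C * n
              ≤ ((t.run f).2 : ℝ) := by
  classical
  refine ⟨2, by norm_num, ?_⟩
  intro n ρ r hr hsum t hcorrect
  rcases Nat.eq_zero_or_pos n with hn | hn
  · subst hn
    refine ⟨fun _ => 0, ⟨fun a => a.elim0, fun i => Or.inl (fun a => a.elim0)⟩, ?_⟩
    simp
  -- main case
  set G := univ.filter (IsGood r hsum) with hG
  have hGne : G.Nonempty := by
    refine ⟨1, ?_⟩
    simp only [hG, mem_filter, mem_univ, true_and]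
    intro a b hab _
    exact hab
  obtain ⟨σs, hσsG, hmax⟩ := Finset.exists_max_image G (fun σ => (t.run (fOf σ)).2) hGne
  set d := (t.run (fOf σs)).2 with hd
  have hsub : G ⊆ leavesLE t d := by
    intro σ hσ
    have hg : IsGood r hsum σ := (mem_filter.mp hσ).2
    have hout : (t.run (fOf σ)).1 = σ :=
      out_eq r hsum σ t (hcorrect _ (isRunDecomp_of_good r hsum σ hg))
    rw [← hout]
    exact run_mem_leavesLE t _ d (hmax σ hσ)
  have hcard : G.card ≤ 2 ^ d :=
    le_trans (Finset.card_le_card hsub) (card_leavesLE t d)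
  have hfact : Nat.factorial n ≤ (∏ i, r i ^ r i) * 2 ^ d :=
    le_trans (count_good r hsum) (Nat.mul_le_mul_left _ hcard)
  refine ⟨fOf σs, isRunDecomp_of_good r hsum σs (mem_filter.mp hσsG).2, ?_⟩
  -- real arithmetic
  have hN : (0:ℝ) < n := by exact_mod_cast hn
  have hrpos : ∀ i, (0:ℝ) < (r i : ℝ) := fun i => by exact_mod_cast hr i
  set P : ℝ := ∏ i, (r i : ℝ) ^ (r i) with hP
  have hPpos : 0 < P := Finset.prod_pos fun i _ => pow_pos (hrpos i) _
  set L : ℝ := ∑ i, (r i : ℝ) * Real.logb 2 (r i) with hL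
  -- Stirling-type bound : n^n ≤ n! * e^n
  have hstir : (n:ℝ) ^ n ≤ (Nat.factorial n : ℝ) * Real.exp n := by
    have h := Real.pow_div_factorial_le_exp (x := (n:ℝ)) (by positivity) n
    have hfpos : (0:ℝ) < (Nat.factorial n : ℝ) := by exact_mod_cast Nat.factorial_pos n
    rw [div_le_iff₀ hfpos] at h
    calc (n:ℝ)^n ≤ Real.exp n * (Nat.factorial n : ℝ) := h
      _ = (Nat.factorial n : ℝ) * Real.exp n := by ring
  have hfactR : (Nat.factorial n : ℝ) ≤ P * 2 ^ d := by
    have := hfact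
    have h2 : ((Nat.factorial n : ℕ) : ℝ) ≤ (((∏ i, r i ^ r i) * 2 ^ d : ℕ) : ℝ) := by
      exact_mod_cast this
    push_cast at h2
    exact h2
  have hchain : (n:ℝ) ^ n ≤ P * 2 ^ d * Real.exp n := by
    calc (n:ℝ)^n ≤ (Nat.factorial n : ℝ) * Real.exp n := hstir
      _ ≤ (P * 2^d) * Real.exp n := by
          apply mul_le_mul_of_nonneg_right hfactR (Real.exp_nonneg _)
  -- take logb 2
  have hlogchain : (n:ℝ) * Real.logb 2 n ≤ Real.logb 2 P + d + (n:ℝ) / Real.log 2 := by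
    have hmono := Real.logb_le_logb_of_le (b := 2) (by norm_num) (by positivity) hchain
    rw [Real.logb_pow] at hmono
    have hexp : Real.logb 2 (P * 2^d * Real.exp n)
        = Real.logb 2 P + d + (n:ℝ) / Real.log 2 := by
      rw [Real.logb_mul (by positivity) (by positivity),
        Real.logb_mul (by positivity) (by positivity), Real.logb_pow,
        Real.logb_self_eq_one (by norm_num), mul_one]
      simp only [Real.logb, Real.log_exp]
    rw [hexp] at hmono
    exact hmono
  have hlogP : Real.logb 2 P = L := by
    rw [hP, Real.logb_prod _ _ (fun i _ => (pow_pos (hrpos i) _).ne'), hL]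
    exact Finset.sum_congr rfl fun i _ => by rw [Real.logb_pow]
  -- entropy identity
  have hH : (n:ℝ) * (∑ i, ((r i : ℝ) / n) * Real.logb 2 ((n : ℝ) / r i))
      = (n:ℝ) * Real.logb 2 n - L := by
    rw [Finset.mul_sum]
    have : ∀ i : Fin ρ, (n:ℝ) * (((r i : ℝ) / n) * Real.logb 2 ((n : ℝ) / r i))
        = (r i : ℝ) * Real.logb 2 n - (r i : ℝ) * Real.logb 2 (r i) := by
      intro i
      rw [Real.logb_div (ne_of_gt hN) (ne_of_gt (hrpos i))]
      field_simp
    rw [Finset.sum_congr rfl fun i _ => this i, Finset.sum_sub_distrib, ← hL,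
      ← Finset.sum_mul]
    congr 2
    exact_mod_cast congrArg (Nat.cast : ℕ → ℝ) hsum
  -- log 2 ≥ 1/2
  have hlog2 : (1:ℝ)/2 ≤ Real.log 2 := by
    have := Real.log_two_gt_d9
    linarith
  have hfrac : (n:ℝ) / Real.log 2 ≤ 2 * n := by
    rw [div_le_iff₀ (by linarith [Real.log_pos (by norm_num : (1:ℝ) < 2)])]
    nlinarith
  rw [hH]
  have : (d:ℝ) = ((t.run (fOf σs)).2 : ℝ) := by rw [hd]
  rw [← this]
  linarith [hlogchain, hlogP]
end

section
/- Define a cost function on the FFT recursion tree over a coefficient vector of length n = 2^m: a node whose coefficient subvector is all zeros has cost 0 and no children; otherwise a node with vector of length m ≥ 2 has cost m and two children given by the even-indexed and odd-indexed subvectors. If ζ is the total number of zero coefficients and the zeros partition into equivalence classes of sizes n_1,...,n_η (each class being a maximal all-zero node of the recursion tree), then the total cost is at most C·((n−ζ)·log₂ n + Σ_{i=1}^η n_i·log₂(n/n_i)) + C·n for some absolute constant C. -/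
open Classical in
noncomputable def fftCost : (m : ℕ) → (ℕ → ℝ) → ℕ
  | 0, a => if a 0 = 0 then 0 else 1
  | m + 1, a =>
      if ∀ i < 2 ^ (m + 1), a i = 0 then 0
      else 2 ^ (m + 1) + fftCost m (fun j => a (2 * j)) + fftCost m (fun j => a (2 * j + 1))

def allZeroNode (m k : ℕ) (a : ℕ → ℝ) (t : ℕ) : Prop :=
  ∀ j < 2 ^ (m - k), a (2 ^ k * j + t % 2 ^ k) = 0

open Classical in
noncomputable def zdepth (m : ℕ) (a : ℕ → ℝ) (t : ℕ) : ℕ :=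
  if h : ∃ k, allZeroNode m k a t then Nat.find h else 0

noncomputable def gwt (m : ℕ) (a : ℕ → ℝ) (t : ℕ) : ℕ :=
  if a t = 0 then zdepth m a t else m + 1

open Classical in
lemma zdepth_le {m k : ℕ} {a : ℕ → ℝ} {t : ℕ} (h : allZeroNode m k a t) :
    zdepth m a t ≤ k := by
  rw [zdepth, dif_pos ⟨k, h⟩]
  exact Nat.find_le h

lemma allZeroNode_succ_iff (m k : ℕ) (a : ℕ → ℝ) (t : ℕ) :
    allZeroNode (m + 1) (k + 1) a t ↔
      allZeroNode m k (fun x => a (2 * x + t % 2)) (t / 2) := by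
  have harg : ∀ j : ℕ, 2 ^ (k+1) * j + t % 2 ^ (k+1)
      = 2 * (2 ^ k * j + t / 2 % 2 ^ k) + t % 2 := by
    intro j
    have h2 : (2:ℕ) ^ (k+1) = 2 * 2 ^ k := by ring
    rw [h2, Nat.mod_mul]
    ring
  unfold allZeroNode
  rw [Nat.succ_sub_succ]
  constructor
  · intro h j hj
    have := h j hj
    rw [harg] at this
    exact this
  · intro h j hj
    rw [harg]
    exact h j hj

open Classical in
lemma zdepth_succ {m : ℕ} {a : ℕ → ℝ} {t : ℕ} (ht : t < 2 ^ (m + 1)) (ha : a t = 0)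
    (hnz : ¬ allZeroNode (m + 1) 0 a t) :
    zdepth (m + 1) a t = zdepth m (fun x => a (2 * x + t % 2)) (t / 2) + 1 := by
  have hex2 : allZeroNode m m (fun x => a (2 * x + t % 2)) (t / 2) := by
    rw [← allZeroNode_succ_iff]
    intro j hj
    have hj0 : j = 0 := by simpa using hj
    subst hj0
    simpa [Nat.mod_eq_of_lt ht] using ha
  have hex1 : ∃ k, allZeroNode (m+1) k a t :=
    ⟨m+1, (allZeroNode_succ_iff m m a t).mpr hex2⟩
  have hex2' : ∃ k, allZeroNode m k (fun x => a (2*x + t%2)) (t/2) := ⟨m, hex2⟩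
  rw [zdepth, dif_pos hex1, zdepth, dif_pos hex2', Nat.find_eq_iff]
  refine ⟨(allZeroNode_succ_iff m _ a t).mpr (Nat.find_spec hex2'), ?_⟩
  intro k hk
  match k with
  | 0 => exact hnz
  | k+1 =>
    rw [allZeroNode_succ_iff]
    exact Nat.find_min hex2' (by omega)

lemma sum_range_two_mul (n : ℕ) (f : ℕ → ℕ) :
    ∑ t ∈ Finset.range (2 * n), f t = ∑ j ∈ Finset.range n, (f (2 * j) + f (2 * j + 1)) := by
  induction n with
  | zero => simp
  | succ n ih =>
    rw [show 2 * (n+1) = 2*n + 1 + 1 by ring, Finset.sum_range_succ, Finset.sum_range_succ, ih,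
      Finset.sum_range_succ]
    ring

open Classical in
lemma fftCost_le_sum : ∀ (m : ℕ) (a : ℕ → ℝ),
    fftCost m a ≤ ∑ t ∈ Finset.range (2 ^ m), gwt m a t := by
  intro m
  induction m with
  | zero =>
    intro a
    by_cases h : a 0 = 0 <;> simp [fftCost, gwt, h]
  | succ m ih =>
    intro a
    rw [fftCost]
    by_cases h : ∀ i < 2 ^ (m+1), a i = 0
    · rw [if_pos h]; exact Nat.zero_le _
    · rw [if_neg h]
      have hnz : ∀ t, ¬ allZeroNode (m+1) 0 a t := by
        intro t hall
        exact h (fun i hi => by simpa [Nat.mod_one] using hall i (by simpa using hi))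
      have key : ∀ t < 2^(m+1), gwt (m+1) a t = gwt m (fun x => a (2*x + t%2)) (t/2) + 1 := by
        intro t ht
        have heq : 2 * (t/2) + t % 2 = t := by omega
        by_cases ha : a t = 0
        · have ha' : a (2*(t/2) + t%2) = 0 := by rw [heq]; exact ha
          simp only [gwt]
          rw [if_pos ha, if_pos ha', zdepth_succ ht ha (hnz t)]
        · have ha' : ¬ a (2*(t/2) + t%2) = 0 := by rw [heq]; exact ha
          simp only [gwt]
          rw [if_neg ha, if_neg ha']
      have h2m : (2:ℕ)^(m+1) = 2 * 2^m := by ring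
      have keyE : ∀ j ∈ Finset.range (2^m),
          gwt (m+1) a (2*j) = gwt m (fun x => a (2*x)) j + 1 := by
        intro j hj
        rw [Finset.mem_range] at hj
        have := key (2*j) (by omega)
        simpa [Nat.mul_div_cancel_left, Nat.mul_mod_right] using this
      have keyO : ∀ j ∈ Finset.range (2^m),
          gwt (m+1) a (2*j+1) = gwt m (fun x => a (2*x+1)) j + 1 := by
        intro j hj
        rw [Finset.mem_range] at hj
        have := key (2*j+1) (by omega)
        have hdiv : (2*j+1)/2 = j := by omega
        have hmod : (2*j+1)%2 = 1 := by omega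
        simpa [hdiv, hmod] using this
      have hsum : ∑ t ∈ Finset.range (2^(m+1)), gwt (m+1) a t
          = (∑ j ∈ Finset.range (2^m), gwt m (fun x => a (2*x)) j)
            + (∑ j ∈ Finset.range (2^m), gwt m (fun x => a (2*x+1)) j) + 2^(m+1) := by
        rw [h2m, sum_range_two_mul]
        rw [Finset.sum_congr rfl (fun j hj => by rw [keyE j hj, keyO j hj])]
        simp only [Finset.sum_add_distrib, Finset.sum_const, Finset.card_range, smul_eq_mul,
          mul_one]
        ring
      have hE := ih (fun x => a (2*x))
      have hO := ih (fun x => a (2*x+1))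
      omega

open Classical in
theorem fft_pruned_cost_bound :
    ∃ C : ℝ, 0 < C ∧
      ∀ (m : ℕ) (a : ℕ → ℝ) (ζ η : ℕ) (sz : Fin η → ℕ) (cls : Fin η → ℕ × ℕ),
        -- ζ is the number of zero coefficients
        ζ = ((Finset.range (2 ^ m)).filter (fun i => a i = 0)).card →
        -- each class is a maximal all-zero node of the recursion tree,
        -- given by a depth `d = (cls i).1` and a residue `r = (cls i).2 < 2^d`
        (∀ i : Fin η,
          (cls i).2 < 2 ^ (cls i).1 ∧ (cls i).1 ≤ m ∧
          (∀ j < 2 ^ (m - (cls i).1), a (2 ^ (cls i).1 * j + (cls i).2) = 0) ∧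
          (1 ≤ (cls i).1 →
            ∃ t < 2 ^ m, t % 2 ^ ((cls i).1 - 1) = (cls i).2 % 2 ^ ((cls i).1 - 1) ∧
              a t ≠ 0) ∧
          sz i = 2 ^ (m - (cls i).1)) →
        Function.Injective cls →
        -- the classes partition the zeros
        (∑ i, sz i) = ζ →
        (fftCost m a : ℝ) ≤
          C * (((2 ^ m : ℝ) - (ζ : ℝ)) * Real.logb 2 (2 ^ m) +
              ∑ i, (sz i : ℝ) * Real.logb 2 ((2 ^ m : ℝ) / (sz i : ℝ))) +
            C * 2 ^ m := by
  refine ⟨2, by norm_num, ?_⟩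
  intro m a ζ η sz cls hζ hcls hinj hsumsz
  set d : Fin η → ℕ := fun i => (cls i).1 with hd
  set r : Fin η → ℕ := fun i => (cls i).2 with hr
  set Z : Finset ℕ := (Finset.range (2 ^ m)).filter (fun t => a t = 0) with hZdef
  set S : Fin η → Finset ℕ :=
    fun i => (Finset.range (2 ^ m)).filter (fun t => t % 2 ^ (d i) = r i) with hSdef
  have hpow : ∀ i : Fin η, (2:ℕ) ^ m = 2 ^ (d i) * 2 ^ (m - d i) := by
    intro i
    rw [← pow_add]
    congr 1
    have h : d i ≤ m := (hcls i).2.1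
    omega
  have hpos : ∀ i : Fin η, 0 < (2:ℕ) ^ (d i) := fun i => Nat.pow_pos (by norm_num)
  -- membership characterization
  have hmemS : ∀ i : Fin η, ∀ t, t ∈ S i ↔ ∃ j < 2 ^ (m - d i), t = 2 ^ (d i) * j + r i := by
    intro i t
    obtain ⟨hri, hdi, hz, -, -⟩ := hcls i
    simp only [hSdef, Finset.mem_filter, Finset.mem_range]
    constructor
    · rintro ⟨htm, hmod⟩
      refine ⟨t / 2 ^ (d i), ?_, ?_⟩
      · rw [Nat.div_lt_iff_lt_mul (hpos i)]
        calc t < 2 ^ m := htm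
          _ = 2 ^ (m - d i) * 2 ^ (d i) := by rw [hpow i]; ring
      · rw [← hmod]
        exact (Nat.div_add_mod t (2 ^ (d i))).symm
    · rintro ⟨j, hj, rfl⟩
      constructor
      · have h1 : j + 1 ≤ 2 ^ (m - d i) := hj
        have h2 := Nat.mul_le_mul_left (2 ^ (d i)) h1
        have := hpow i
        have := hri
        nlinarith
      · rw [Nat.mul_add_mod]
        exact Nat.mod_eq_of_lt hri
  have hSsub : ∀ i : Fin η, S i ⊆ Z := by
    intro i t ht
    obtain ⟨j, hj, rfl⟩ := (hmemS i t).mp ht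
    simp only [hZdef, Finset.mem_filter]
    refine ⟨(Finset.mem_filter.mp ht).1, (hcls i).2.2.1 j hj⟩
  have hScard : ∀ i : Fin η, (S i).card = sz i := by
    intro i
    have himg : S i = (Finset.range (2 ^ (m - d i))).image (fun j => 2 ^ (d i) * j + r i) := by
      ext t
      rw [hmemS i t]
      simp only [Finset.mem_image, Finset.mem_range]
      constructor
      · rintro ⟨j, hj, rfl⟩; exact ⟨j, hj, rfl⟩
      · rintro ⟨j, hj, rfl⟩; exact ⟨j, hj, rfl⟩
    rw [himg, Finset.card_image_of_injective _ ?_, Finset.card_range, (hcls i).2.2.2.2]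
    intro x y hxy
    simp only [] at hxy
    have h5 : 2 ^ (d i) * x = 2 ^ (d i) * y := by omega
    exact Nat.eq_of_mul_eq_mul_left (hpos i) h5
  -- disjointness
  have hkey : ∀ i i' : Fin η, i ≠ i' → d i ≤ d i' → ∀ t, t ∈ S i → t ∈ S i' → False := by
    intro i i' hne hle t hti hti'
    have hri : r i < 2 ^ (d i) := (hcls i).1
    have hdi : d i ≤ m := (hcls i).2.1
    have hz : ∀ j < 2 ^ (m - d i), a (2 ^ (d i) * j + r i) = 0 := (hcls i).2.2.1
    have hmax' : 1 ≤ d i' →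
        ∃ t < 2 ^ m, t % 2 ^ (d i' - 1) = r i' % 2 ^ (d i' - 1) ∧ a t ≠ 0 :=
      (hcls i').2.2.2.1
    have htiF := Finset.mem_filter.mp hti
    have htiF' := Finset.mem_filter.mp hti'
    have hmi : t % 2 ^ (d i) = r i := htiF.2
    have hmi' : t % 2 ^ (d i') = r i' := htiF'.2
    rcases Nat.lt_or_ge (d i) (d i') with hlt | hge
    · obtain ⟨s, hs, hsmod, hsnz⟩ := hmax' (by omega)
      have hdvd1 : (2:ℕ) ^ (d i) ∣ 2 ^ (d i' - 1) := pow_dvd_pow 2 (by omega)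
      have hdvd2 : (2:ℕ) ^ (d i) ∣ 2 ^ (d i') := pow_dvd_pow 2 (by omega)
      have h1 : s % 2 ^ (d i) = r i' % 2 ^ (d i) := by
        calc s % 2 ^ (d i) = s % 2 ^ (d i' - 1) % 2 ^ (d i) :=
              (Nat.mod_mod_of_dvd s hdvd1).symm
          _ = r i' % 2 ^ (d i' - 1) % 2 ^ (d i) := by rw [hsmod]
          _ = r i' % 2 ^ (d i) := Nat.mod_mod_of_dvd _ hdvd1
      have h2 : t % 2 ^ (d i) = r i' % 2 ^ (d i) := by
        calc t % 2 ^ (d i) = t % 2 ^ (d i') % 2 ^ (d i) := (Nat.mod_mod_of_dvd t hdvd2).symm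
          _ = r i' % 2 ^ (d i) := by rw [hmi']
      have h3 : s % 2 ^ (d i) = r i := by rw [h1, ← h2, hmi]
      have hjlt : s / 2 ^ (d i) < 2 ^ (m - d i) := by
        rw [Nat.div_lt_iff_lt_mul (hpos i)]
        calc s < 2 ^ m := hs
          _ = 2 ^ (m - d i) * 2 ^ (d i) := by rw [hpow i]; ring
      have h4 := hz (s / 2 ^ (d i)) hjlt
      rw [← h3, Nat.div_add_mod] at h4
      exact hsnz h4
    · have hde : d i = d i' := le_antisymm hle hge
      have hre : r i = r i' := by rw [← hmi, ← hmi', hde]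
      exact hne (hinj (Prod.ext hde hre))
  have hdisj : ∀ i i' : Fin η, i ≠ i' → Disjoint (S i) (S i') := by
    intro i i' hne
    rcases le_total (d i) (d i') with h | h
    · exact Finset.disjoint_left.mpr (fun {t} ht ht' => absurd (hkey i i' hne h t ht ht') not_false)
    · exact Finset.disjoint_right.mpr (fun {t} ht' ht => absurd (hkey i' i hne.symm h t ht' ht) not_false)
  have hsubU : Finset.univ.biUnion S ⊆ Z := Finset.biUnion_subset.mpr (fun i _ => hSsub i)
  have hcardU : (Finset.univ.biUnion S).card = Z.card := by
    rw [Finset.card_biUnion (fun i _ i' _ h => hdisj i i' h)]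
    rw [Finset.sum_congr rfl (fun i _ => hScard i), hsumsz, hζ]
  have hZU : Finset.univ.biUnion S = Z :=
    Finset.eq_of_subset_of_card_le hsubU (le_of_eq hcardU.symm)
  -- bound the sum of depths over the zeros
  have hZsum : ∑ t ∈ Z, zdepth m a t ≤ ∑ i : Fin η, sz i * d i := by
    rw [← hZU, Finset.sum_biUnion (fun i _ i' _ h => hdisj i i' h)]
    apply Finset.sum_le_sum
    intro i _
    have hbd : ∀ t ∈ S i, zdepth m a t ≤ d i := by
      intro t ht
      apply zdepth_le
      intro j hj
      have hmod : t % 2 ^ (d i) = r i := (Finset.mem_filter.mp ht).2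
      rw [hmod]
      exact (hcls i).2.2.1 j hj
    calc ∑ t ∈ S i, zdepth m a t ≤ ∑ t ∈ S i, d i := Finset.sum_le_sum hbd
      _ = (S i).card * d i := by rw [Finset.sum_const, smul_eq_mul]
      _ = sz i * d i := by rw [hScard i]
  -- total weight bound in ℕ
  set NZ : ℕ := ((Finset.range (2 ^ m)).filter (fun t => ¬ a t = 0)).card with hNZ
  have hgsum : ∑ t ∈ Finset.range (2 ^ m), gwt m a t
      = (∑ t ∈ Z, zdepth m a t) + NZ * (m + 1) := by
    rw [← Finset.sum_filter_add_sum_filter_not (Finset.range (2 ^ m)) (fun t => a t = 0)]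
    congr 1
    · exact Finset.sum_congr rfl (fun t ht => by
        rw [gwt, if_pos (Finset.mem_filter.mp ht).2])
    · rw [Finset.sum_congr rfl (fun t ht => by
        rw [gwt, if_neg (Finset.mem_filter.mp ht).2]), Finset.sum_const, smul_eq_mul]
  have hcost : fftCost m a ≤ (∑ i : Fin η, sz i * d i) + NZ * (m + 1) := by
    calc fftCost m a ≤ ∑ t ∈ Finset.range (2 ^ m), gwt m a t := fftCost_le_sum m a
      _ = (∑ t ∈ Z, zdepth m a t) + NZ * (m + 1) := hgsum
      _ ≤ (∑ i : Fin η, sz i * d i) + NZ * (m + 1) := by omega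
  -- counting facts
  have hcards : ζ + NZ = 2 ^ m := by
    rw [hζ, hNZ, Finset.card_filter_add_card_filter_not, Finset.card_range]
  -- logarithm computations
  have hlog2 : Real.log 2 ≠ 0 := ne_of_gt (Real.log_pos (by norm_num))
  have hlogk : ∀ k : ℕ, Real.logb 2 ((2:ℝ) ^ k) = k := by
    intro k
    rw [Real.logb, Real.log_pow, mul_div_assoc, div_self hlog2, mul_one]
  have hlogterm : ∀ i : Fin η,
      (sz i : ℝ) * Real.logb 2 ((2 ^ m : ℝ) / (sz i : ℝ)) = (sz i : ℝ) * (d i : ℝ) := by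
    intro i
    have hszi : sz i = 2 ^ (m - d i) := (hcls i).2.2.2.2
    have hcast : (sz i : ℝ) = (2:ℝ) ^ (m - d i) := by rw [hszi]; push_cast; ring
    have hdiv : (2 ^ m : ℝ) / (sz i : ℝ) = (2:ℝ) ^ (d i) := by
      rw [hcast]
      rw [show (2:ℝ) ^ m = 2 ^ (d i) * 2 ^ (m - d i) by
        rw [← pow_add]; congr 1; have h : d i ≤ m := (hcls i).2.1; omega]
      rw [mul_div_assoc, div_self (by positivity), mul_one]
    rw [hdiv, hlogk]
  -- put it together over ℝ
  have hcostR : (fftCost m a : ℝ) ≤ (∑ i : Fin η, (sz i : ℝ) * (d i : ℝ)) + (NZ : ℝ) * (m + 1) := by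
    have := hcost
    have hc : ((∑ i : Fin η, sz i * d i : ℕ) : ℝ) = ∑ i : Fin η, (sz i : ℝ) * (d i : ℝ) := by
      push_cast; ring
    calc (fftCost m a : ℝ) ≤ (((∑ i : Fin η, sz i * d i) + NZ * (m + 1) : ℕ) : ℝ) := by
          exact_mod_cast this
      _ = (∑ i : Fin η, (sz i : ℝ) * (d i : ℝ)) + (NZ : ℝ) * (m + 1) := by push_cast; ring
  rw [hlogk m, Finset.sum_congr rfl (fun i _ => hlogterm i)]
  have hNZR : ((2 ^ m : ℝ) - (ζ : ℝ)) = (NZ : ℝ) := by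
    have : (ζ : ℝ) + (NZ : ℝ) = (2:ℝ) ^ m := by exact_mod_cast hcards
    linarith
  rw [hNZR]
  have hSnn : 0 ≤ ∑ i : Fin η, (sz i : ℝ) * (d i : ℝ) :=
    Finset.sum_nonneg (fun i _ => by positivity)
  have hNZle : (NZ : ℝ) ≤ (2:ℝ) ^ m := by
    have : NZ ≤ 2 ^ m := by omega
    exact_mod_cast this
  have hNZnn : (0:ℝ) ≤ (NZ : ℝ) := Nat.cast_nonneg _
  have hmnn : (0:ℝ) ≤ (m : ℝ) := Nat.cast_nonneg _
  nlinarith [hcostR, hSnn, hNZle, hNZnn, hmnn, mul_nonneg hNZnn hmnn]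
end
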